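/- Let μ and ν be finite Borel measures on ℝ^d that are mutually absolutely continuous on a Borel set E, with ν|_E = h·μ|_E for a density h with 0 < h < ∞ μ-a.e. on E. Then for μ-almost every ξ ∈ E and every a > 1, the limit as r → 0 of [μ(B(ξ,ar))/μ(B(ξ,r))] · [ν(B(ξ,r))/ν(B(ξ,ar))] equals 1. -/

import Mathlib

open MeasureTheory Metric Filter
open scoped ENNReal

/-- An open ball is the increasing union of closed balls of slightly smaller radii. -/
lemma ball_eq_iUnion_closedBall {X : Type*} [PseudoMetricSpace X] (ξ : X) {r : ℝ} (hr : 0 < r) :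
    ball ξ r = ⋃ k : ℕ, closedBall ξ (r - r / ((k : ℝ) + 2)) := by
  ext y
  simp only [mem_ball, Set.mem_iUnion, mem_closedBall]
  constructor
  · intro hy
    have hε : 0 < r - dist y ξ := sub_pos.2 hy
    obtain ⟨k, hk⟩ := exists_nat_ge (r / (r - dist y ξ))
    refine ⟨k, ?_⟩
    have hk' : r ≤ (k : ℝ) * (r - dist y ξ) := (div_le_iff₀ hε).1 hk
    have h2 : r / ((k : ℝ) + 2) ≤ r - dist y ξ := by
      rw [div_le_iff₀ (by positivity : (0 : ℝ) < (k : ℝ) + 2)]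
      nlinarith
    linarith
  · rintro ⟨k, hk⟩
    have hpos : 0 < r / ((k : ℝ) + 2) := by positivity
    linarith

/-- The family of closed balls used above is monotone. -/
lemma closedBall_family_monotone {X : Type*} [PseudoMetricSpace X] (ξ : X) {r : ℝ} (hr : 0 < r) :
    Monotone (fun k : ℕ => closedBall ξ (r - r / ((k : ℝ) + 2))) := by
  intro k l hkl
  apply closedBall_subset_closedBall
  have h1 : ((k : ℝ) + 2) ≤ ((l : ℝ) + 2) := by
    have : (k : ℝ) ≤ (l : ℝ) := Nat.cast_le.mpr hkl
    linarith
  have h2 : r / ((l : ℝ) + 2) ≤ r / ((k : ℝ) + 2) := by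
    apply div_le_div_of_nonneg_left hr.le (by positivity) h1
  linarith

/-- Pointwise: if the closed-ball ratio converges, so does the open-ball ratio. -/
lemma tendsto_ball_ratio_of_tendsto_closedBall_ratio {X : Type*} [PseudoMetricSpace X]
    {mX : MeasurableSpace X} (μ ν : Measure X) [IsFiniteMeasure μ] [IsFiniteMeasure ν]
    (ξ : X) (L : ℝ≥0∞)
    (hM : ∀ s : ℝ, 0 < s → μ (closedBall ξ s) ≠ 0)
    (hT : Tendsto (fun r => ν (closedBall ξ r) / μ (closedBall ξ r)) (nhdsWithin 0 (Set.Ioi 0))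
      (nhds L)) :
    Tendsto (fun r => ν (ball ξ r) / μ (ball ξ r)) (nhdsWithin 0 (Set.Ioi 0)) (nhds L) := by
  rw [tendsto_order]
  constructor
  · intro c hc
    obtain ⟨c', hcc', hc'L⟩ := exists_between hc
    have hev : ∀ᶠ s in nhdsWithin (0:ℝ) (Set.Ioi 0),
        c' < ν (closedBall ξ s) / μ (closedBall ξ s) := hT.eventually (eventually_gt_nhds hc'L)
    obtain ⟨r₀, hr₀, hsub⟩ := mem_nhdsGT_iff_exists_Ioc_subset.1 hev
    filter_upwards [Ioc_mem_nhdsGT hr₀] with r hr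
    have hrpos : 0 < r := hr.1
    have hmono := closedBall_family_monotone ξ hrpos
    have hkey : c' * μ (ball ξ r) ≤ ν (ball ξ r) := by
      rw [ball_eq_iUnion_closedBall ξ hrpos, Directed.measure_iUnion hmono.directed_le,
        Directed.measure_iUnion hmono.directed_le, ENNReal.mul_iSup]
      refine iSup_mono fun k => ?_
      have hspos : 0 < r - r / ((k : ℝ) + 2) := by
        have : r / ((k : ℝ) + 2) < r := div_lt_self hrpos (by have := Nat.cast_nonneg (α := ℝ) k; linarith)
        linarith
      have hsle : r - r / ((k : ℝ) + 2) ≤ r₀ := by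
        have : 0 < r / ((k : ℝ) + 2) := by positivity
        linarith [hr.2]
      have hlt : c' < ν (closedBall ξ (r - r / ((k : ℝ) + 2))) / μ (closedBall ξ (r - r / ((k : ℝ) + 2))) := hsub ⟨hspos, hsle⟩
      have hN0 : ν (closedBall ξ (r - r / ((k : ℝ) + 2))) ≠ 0 := by
        intro h0
        rw [h0, ENNReal.zero_div] at hlt
        exact (not_lt.2 (zero_le (a := c'))) hlt
      exact (ENNReal.le_div_iff_mul_le (Or.inr hN0) (Or.inl (measure_ne_top μ _))).1 hlt.le
    have hm0 : μ (ball ξ r) ≠ 0 := by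
      intro h0
      exact hM (r / 2) (by linarith)
        (le_antisymm ((measure_mono (closedBall_subset_ball (by linarith))).trans h0.le)
          zero_le)
    calc c < c' := hcc'
      _ ≤ ν (ball ξ r) / μ (ball ξ r) :=
        (ENNReal.le_div_iff_mul_le (Or.inl hm0) (Or.inl (measure_ne_top μ _))).2 hkey
  · intro c hc
    obtain ⟨c', hLc', hc'c⟩ := exists_between hc
    have hc't : c' ≠ ⊤ := hc'c.ne_top
    have hev : ∀ᶠ s in nhdsWithin (0:ℝ) (Set.Ioi 0),
        ν (closedBall ξ s) / μ (closedBall ξ s) < c' := hT.eventually (eventually_lt_nhds hLc')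
    obtain ⟨r₀, hr₀, hsub⟩ := mem_nhdsGT_iff_exists_Ioc_subset.1 hev
    filter_upwards [Ioc_mem_nhdsGT hr₀] with r hr
    have hrpos : 0 < r := hr.1
    have hmono := closedBall_family_monotone ξ hrpos
    have hkey : ν (ball ξ r) ≤ c' * μ (ball ξ r) := by
      rw [ball_eq_iUnion_closedBall ξ hrpos, Directed.measure_iUnion hmono.directed_le,
        Directed.measure_iUnion hmono.directed_le, ENNReal.mul_iSup]
      refine iSup_mono fun k => ?_
      have hspos : 0 < r - r / ((k : ℝ) + 2) := by
        have : r / ((k : ℝ) + 2) < r := div_lt_self hrpos (by have := Nat.cast_nonneg (α := ℝ) k; linarith)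
        linarith
      have hsle : r - r / ((k : ℝ) + 2) ≤ r₀ := by
        have : 0 < r / ((k : ℝ) + 2) := by positivity
        linarith [hr.2]
      have hlt : ν (closedBall ξ (r - r / ((k : ℝ) + 2))) / μ (closedBall ξ (r - r / ((k : ℝ) + 2))) < c' := hsub ⟨hspos, hsle⟩
      exact (ENNReal.div_le_iff_le_mul (Or.inr hc't) (Or.inl (measure_ne_top μ _))).1 hlt.le
    calc ν (ball ξ r) / μ (ball ξ r) ≤ c' :=
        (ENNReal.div_le_iff_le_mul (Or.inr hc't) (Or.inl (measure_ne_top μ _))).2 hkey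
      _ < c := hc'c

/-- Arithmetic identity in `ℝ≥0∞` for positive finite quantities. -/
lemma ennreal_ratio_eq (x y u v : ℝ≥0∞) (hx0 : x ≠ 0) (hxt : x ≠ ⊤) (hy0 : y ≠ 0) (hyt : y ≠ ⊤)
    (hu0 : u ≠ 0) (hut : u ≠ ⊤) (hv0 : v ≠ 0) (hvt : v ≠ ⊤) :
    (u / x) * (y / v) = (y / x) / (v / u) := by
  lift x to NNReal using hxt
  lift y to NNReal using hyt
  lift u to NNReal using hut
  lift v to NNReal using hvt
  rw [ENNReal.coe_ne_zero] at hx0 hy0 hu0 hv0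
  have hvu : v / u ≠ 0 := div_ne_zero hv0 hu0
  rw [← ENNReal.coe_div hx0, ← ENNReal.coe_div hv0, ← ENNReal.coe_mul, ← ENNReal.coe_div hx0,
    ← ENNReal.coe_div hu0, ← ENNReal.coe_div hvu, ENNReal.coe_inj]
  field_simp

theorem doubling_ratio_limit_one (d : ℕ) (μ ν : Measure (EuclideanSpace ℝ (Fin d)))
    [IsFiniteMeasure μ] [IsFiniteMeasure ν]
    (E : Set (EuclideanSpace ℝ (Fin d))) (hE : MeasurableSet E)
    (h : EuclideanSpace ℝ (Fin d) → ℝ≥0∞)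
    (hdens : ν.restrict E = (μ.restrict E).withDensity h)
    (hpos : ∀ᵐ x ∂(μ.restrict E), 0 < h x ∧ h x < ⊤)
    (habs : μ.restrict E ≪ ν.restrict E ∧ ν.restrict E ≪ μ.restrict E) :
    ∀ᵐ ξ ∂(μ.restrict E), ∀ a : ℝ, 1 < a →
      Tendsto (fun r : ℝ =>
          (μ (ball ξ (a * r)) / μ (ball ξ r)) * (ν (ball ξ r) / ν (ball ξ (a * r))))
        (nhdsWithin 0 (Set.Ioi 0)) (nhds 1) := by
  -- differentiation of measures along closed balls
  have hA1 : ∀ᵐ x ∂(μ.restrict E),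
      Tendsto (fun r => ν (closedBall x r) / μ (closedBall x r)) (nhdsWithin 0 (Set.Ioi 0))
        (nhds (ν.rnDeriv μ x)) :=
    ae_restrict_of_ae (Besicovitch.ae_tendsto_rnDeriv ν μ)
  have hA2 : ∀ᵐ x ∂(μ.restrict E), ν.rnDeriv μ x < ⊤ :=
    ae_restrict_of_ae (Measure.rnDeriv_lt_top ν μ)
  -- positivity of the Radon–Nikodym derivative a.e. on E
  have hZmeas : MeasurableSet {x | ν.rnDeriv μ x = 0} :=
    Measure.measurable_rnDeriv ν μ (measurableSet_singleton 0)
  have hνEμ : ν.restrict E ≪ μ :=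
    habs.2.trans (Measure.absolutelyContinuous_of_le Measure.restrict_le_self)
  have hkeyZ : (ν.restrict E) {x | ν.rnDeriv μ x = 0} = 0 := by
    haveI := Measure.haveLebesgueDecomposition_of_sigmaFinite (ν.restrict E) μ
    haveI := Measure.haveLebesgueDecomposition_of_sigmaFinite ν μ
    have h1 : ν.restrict E = μ.withDensity ((ν.restrict E).rnDeriv μ) :=
      (Measure.withDensity_rnDeriv_eq _ _ hνEμ).symm
    have h2 : (ν.restrict E).rnDeriv μ =ᵐ[μ] E.indicator (ν.rnDeriv μ) :=
      Measure.rnDeriv_restrict ν μ hE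
    rw [h1, withDensity_apply _ hZmeas]
    refine le_antisymm ?_ zero_le
    calc ∫⁻ x in {x | ν.rnDeriv μ x = 0}, (ν.restrict E).rnDeriv μ x ∂μ
        = ∫⁻ x in {x | ν.rnDeriv μ x = 0}, E.indicator (ν.rnDeriv μ) x ∂μ :=
          lintegral_congr_ae (ae_restrict_of_ae h2)
      _ ≤ ∫⁻ x in {x | ν.rnDeriv μ x = 0}, ν.rnDeriv μ x ∂μ :=
          lintegral_mono fun x => Set.indicator_le_self _ _ x
      _ = ∫⁻ x in {x | ν.rnDeriv μ x = 0}, (0 : ℝ≥0∞) ∂μ :=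
          setLIntegral_congr_fun hZmeas (fun x hx => hx)
      _ ≤ 0 := by simp
  have hA3 : ∀ᵐ x ∂(μ.restrict E), 0 < ν.rnDeriv μ x := by
    have hμZ : (μ.restrict E) {x | ν.rnDeriv μ x = 0} = 0 := habs.1 hkeyZ
    rw [ae_iff]
    convert hμZ using 2
    ext x
    simp [pos_iff_ne_zero]
  filter_upwards [hA1, hA2, hA3] with ξ hT hfin hLpos
  intro a ha
  set L := ν.rnDeriv μ ξ with hLdef
  have hL0 : L ≠ 0 := hLpos.ne'
  have hLt : L ≠ ⊤ := hfin.ne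
  -- closed balls around ξ have positive μ-measure
  have hM : ∀ s : ℝ, 0 < s → μ (closedBall ξ s) ≠ 0 := by
    intro s hs hzero
    have hev := hT.eventually (Ioo_mem_nhds (ENNReal.half_lt_self hL0 hLt)
      (ENNReal.lt_add_right hLt one_ne_zero))
    have hev2 : ∀ᶠ t in nhdsWithin (0:ℝ) (Set.Ioi 0), t ∈ Set.Ioc 0 s :=
      Ioc_mem_nhdsGT hs
    obtain ⟨t, ht1, ht2⟩ := (hev.and hev2).exists
    have hMt : μ (closedBall ξ t) = 0 :=
      le_antisymm ((measure_mono (closedBall_subset_closedBall ht2.2)).trans hzero.le) zero_le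
    rcases eq_or_ne (ν (closedBall ξ t)) 0 with hN | hN
    · rw [hMt, hN] at ht1
      simp only [ENNReal.zero_div] at ht1
      exact (not_lt.2 zero_le) ht1.1
    · rw [hMt, ENNReal.div_zero hN] at ht1
      exact (not_top_lt) ht1.2
  have hball0 : ∀ s : ℝ, 0 < s → μ (ball ξ s) ≠ 0 := by
    intro s hs h0
    exact hM (s / 2) (by linarith)
      (le_antisymm ((measure_mono (closedBall_subset_ball (by linarith))).trans h0.le) zero_le)
  -- ball version of differentiation
  have hf : Tendsto (fun r => ν (ball ξ r) / μ (ball ξ r)) (nhdsWithin 0 (Set.Ioi 0)) (nhds L) :=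
    tendsto_ball_ratio_of_tendsto_closedBall_ratio μ ν ξ L hM hT
  have ha0 : (0:ℝ) < a := lt_trans one_pos ha
  have hmap : Tendsto (fun r : ℝ => a * r) (nhdsWithin 0 (Set.Ioi 0))
      (nhdsWithin 0 (Set.Ioi 0)) := by
    rw [tendsto_nhdsWithin_iff]
    constructor
    · have : Tendsto (fun r : ℝ => a * r) (nhds 0) (nhds (a * 0)) :=
        (continuous_const.mul continuous_id).tendsto 0
      rw [mul_zero] at this
      exact this.mono_left nhdsWithin_le_nhds
    · exact eventually_mem_nhdsWithin.mono fun r hr => mul_pos ha0 hr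
  have hg : Tendsto (fun r => ν (ball ξ (a * r)) / μ (ball ξ (a * r)))
      (nhdsWithin 0 (Set.Ioi 0)) (nhds L) := hf.comp hmap
  have hdiv : Tendsto (fun r =>
      (ν (ball ξ r) / μ (ball ξ r)) / (ν (ball ξ (a * r)) / μ (ball ξ (a * r))))
      (nhdsWithin 0 (Set.Ioi 0)) (nhds 1) := by
    have := ENNReal.Tendsto.div hf (Or.inl hL0) hg (Or.inl hLt)
    rwa [ENNReal.div_self hL0 hLt] at this
  -- eventually ν-balls are nonzero
  have hn : ∀ᶠ r in nhdsWithin (0:ℝ) (Set.Ioi 0), ν (ball ξ r) ≠ 0 := by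
    filter_upwards [hf.eventually (eventually_gt_nhds (pos_iff_ne_zero.2 hL0))] with r hr h0
    rw [h0, ENNReal.zero_div] at hr
    exact lt_irrefl _ hr
  apply hdiv.congr'
  filter_upwards [hn, hmap.eventually hn, eventually_mem_nhdsWithin] with r hn1 hn2 hr
  have hrpos : (0:ℝ) < r := hr
  exact (ennreal_ratio_eq (μ (ball ξ r)) (ν (ball ξ r)) (μ (ball ξ (a * r))) (ν (ball ξ (a * r)))
    (hball0 r hrpos) (measure_ne_top μ _) hn1 (measure_ne_top ν _)
    (hball0 (a * r) (mul_pos ha0 hrpos)) (measure_ne_top μ _) hn2 (measure_ne_top ν _)).symm
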